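/- Suppose a ∉ I (in particular, a = −∞ is allowed). Then for every integer j ≥ 0 and every set M ⊆ {j+1, j+2, …} there exists a sequence w = (w_0, w_1, …) of positive, Borel-measurable, locally bounded functions on I such that, with the functions p_{a;j,m} defined from this w, one has {m ≥ j+1 : p_{a;j,m}(x) < ∞ for all x ∈ I} = M. -/

import Mathlib

open MeasureTheory Set Filter
open scoped ENNReal

noncomputable section

/-- `g` is right-continuous at every point of `I` that is not the greatest point of `I`,
and left-continuous at the greatest point of `I` when the latter exists (the class `LD`). -/
def IsLD (I : Set ℝ) (g : ℝ → ℝ) : Prop :=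
  (∀ x ∈ I, (∃ y ∈ I, x < y) → Tendsto g (nhdsWithin x (I ∩ Ioi x)) (nhds (g x))) ∧
  (∀ x ∈ I, (∀ y ∈ I, y ≤ x) → Tendsto g (nhdsWithin x (I ∩ Iio x)) (nhds (g x)))

/-- `d 0, …, d n` is the system of generalized derivatives of `f` on `I` with respect to the
gauge sequence `w`; i.e., `f ∈ L^n` with `f^{(j)} = d j` for `j = 0, …, n`. -/
structure IsGenL (I : Set ℝ) (w : ℕ → ℝ → ℝ) (n : ℕ) (f : ℝ → ℝ) (d : ℕ → ℝ → ℝ) : Prop where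
  base : ∀ x ∈ I, f x = d 0 x * w 0 x
  ld : IsLD I (d n)
  integrable : ∀ j < n, ∀ z ∈ I, ∀ x ∈ I,
    IntervalIntegrable (fun u => d (j + 1) u * w (j + 1) u) volume z x
  deriv_eq : ∀ j < n, ∀ z ∈ I, ∀ x ∈ I,
    d j x = d j z + ∫ u in z..x, d (j + 1) u * w (j + 1) u

/-- `f ∈ F_+^{k:n}(I)` (with derivative system `d`): all the generalized derivatives
`f^{(j)} = d j` of orders `j = k-1, …, n` are nondecreasing on `I`. -/
def MemF (I : Set ℝ) (w : ℕ → ℝ → ℝ) (k n : ℕ) (f : ℝ → ℝ) (d : ℕ → ℝ → ℝ) : Prop :=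
  IsGenL I w n f d ∧ ∀ j, k - 1 ≤ j → j ≤ n → MonotoneOn (d j) I

/-- `w` is a sequence of positive, Borel-measurable, locally bounded gauge functions on `I`. -/
def IsGauge (I : Set ℝ) (w : ℕ → ℝ → ℝ) : Prop :=
  ∀ j, (∀ x ∈ I, 0 < w j x) ∧ Measurable (fun x : I => w j x) ∧
    ∀ K ⊆ I, IsCompact K → ∃ C, ∀ x ∈ K, |w j x| ≤ C

def pAux (w : ℕ → ℝ → ℝ) (t : ℝ) (m : ℕ) : ℕ → ℝ → ℝ
  | 0 => w m
  | (i + 1) => fun x => w (m - (i + 1)) x * ∫ u in t..x, pAux w t m i u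

/-- The `w`-polynomial `p_{t;j,m}` (for `t ∈ I`). -/
def pfun (w : ℕ → ℝ → ℝ) (t : ℝ) (j m : ℕ) : ℝ → ℝ := pAux w t m (m - j)

/-- The "positive part" `p^+_{t;j,m}`. -/
def pplus (w : ℕ → ℝ → ℝ) (t : ℝ) (j m : ℕ) : ℝ → ℝ := fun x =>
  if t ≤ x then pfun w t j m x else 0

def pAuxE (w : ℕ → ℝ → ℝ) (I : Set ℝ) (m : ℕ) : ℕ → ℝ → ℝ≥0∞
  | 0 => fun x => ENNReal.ofReal (w m x)
  | (i + 1) => fun x =>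
      ENNReal.ofReal (w (m - (i + 1)) x) * ∫⁻ u in I ∩ Iio x, pAuxE w I m i u

/-- `p_{a;j,m} : I → [0, ∞]`, where `a` is the left endpoint of `I` (the integrals from `a`
are taken over `(a, x) ∩ I = I ∩ Iio x`). -/
def pE (w : ℕ → ℝ → ℝ) (I : Set ℝ) (j m : ℕ) : ℝ → ℝ≥0∞ := pAuxE w I m (m - j)

/-- The filter of `x ↓ a` within `I`, `a` being the left endpoint of `I`. -/
def leftEndFilter (I : Set ℝ) : Filter ℝ := ⨅ c ∈ I, Filter.principal (I ∩ Iic c)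

/-- `ν(f) = ∫_I f dν ∈ [−∞, ∞]`. -/
def nuEval (ν : Measure ℝ) (I : Set ℝ) (f : ℝ → ℝ) : EReal :=
  ((∫⁻ x in I, ENNReal.ofReal (f x) ∂ν : ℝ≥0∞) : EReal)
    - ((∫⁻ x in I, ENNReal.ofReal (-f x) ∂ν : ℝ≥0∞) : EReal)

/-- The expectation `E g ∈ [−∞, ∞]` (in the extended sense). -/
def eval' {α : Type*} [MeasurableSpace α] (P : Measure α) (g : α → ℝ) : EReal :=
  ((∫⁻ a, ENNReal.ofReal (g a) ∂P : ℝ≥0∞) : EReal)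
    - ((∫⁻ a, ENNReal.ofReal (-g a) ∂P : ℝ≥0∞) : EReal)


section AuxStmt3

open Real

private lemma exists_lt_of_mem' {I : Set ℝ} (hnomin : ¬∃ x, IsLeast I x) {x : ℝ}
    (hx : x ∈ I) : ∃ c ∈ I, c < x := by
  by_contra h
  push_neg at h
  exact hnomin ⟨x, hx, fun y hy => h y hy⟩

private lemma sInf_lt_of_mem {I : Set ℝ} (hnomin : ¬∃ x, IsLeast I x) (hbdd : BddBelow I)
    {x : ℝ} (hx : x ∈ I) : sInf I < x := by
  rcases lt_or_eq_of_le (csInf_le hbdd hx) with h | h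
  · exact h
  · exfalso
    exact hnomin ⟨x, ⟨hx, fun y hy => h ▸ csInf_le hbdd hy⟩⟩

private lemma inter_Iio_eq_Ioo {I : Set ℝ} (hI : I.OrdConnected)
    (hnomin : ¬∃ x, IsLeast I x) (hbdd : BddBelow I) {x : ℝ} (hx : x ∈ I) :
    I ∩ Iio x = Ioo (sInf I) x := by
  ext u
  constructor
  · rintro ⟨huI, hu⟩
    exact ⟨sInf_lt_of_mem hnomin hbdd huI, hu⟩
  · rintro ⟨h1, h2⟩
    obtain ⟨c, hc, hcu⟩ := exists_lt_of_csInf_lt ⟨x, hx⟩ h1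
    exact ⟨hI.out hc hx ⟨hcu.le, h2.le⟩, h2⟩

private lemma inter_Iio_eq_Iio {I : Set ℝ} (hI : I.OrdConnected) (hbdd : ¬BddBelow I)
    {x : ℝ} (hx : x ∈ I) : I ∩ Iio x = Iio x := by
  ext u
  refine ⟨fun h => h.2, fun hu => ⟨?_, hu⟩⟩
  obtain ⟨c, hc, hcu⟩ : ∃ c ∈ I, c < u := by
    by_contra h
    push_neg at h
    exact hbdd ⟨u, fun y hy => h y hy⟩
  exact hI.out hc hx ⟨hcu.le, hu.le⟩

/-- Propagation of infiniteness through the levels of `pAuxE`. -/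
private lemma top_prop {I : Set ℝ} (hI : I.OrdConnected)
    (hnomin : ¬∃ x, IsLeast I x) {w : ℕ → ℝ → ℝ}
    (hw : ∀ i, ∀ x ∈ I, 0 < w i x) (m : ℕ)
    (h1 : ∀ x ∈ I, (∫⁻ u in I ∩ Iio x, ENNReal.ofReal (w m u)) = ⊤) :
    ∀ i, ∀ x ∈ I, pAuxE w I m (i + 1) x = ⊤ := by
  intro i
  induction i with
  | zero =>
    intro x hx
    show ENNReal.ofReal (w (m - 1) x) * (∫⁻ u in I ∩ Iio x, pAuxE w I m 0 u) = ⊤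
    have : (∫⁻ u in I ∩ Iio x, pAuxE w I m 0 u) = ⊤ := h1 x hx
    rw [this]
    exact ENNReal.mul_top (ENNReal.ofReal_pos.2 (hw _ x hx)).ne'
  | succ i ih =>
    intro x hx
    obtain ⟨c, hc, hcx⟩ := exists_lt_of_mem' hnomin hx
    have hsub : Ioo c x ⊆ I ∩ Iio x := fun u hu =>
      ⟨hI.out hc hx ⟨hu.1.le, hu.2.le⟩, hu.2⟩
    have htop : (∫⁻ u in I ∩ Iio x, pAuxE w I m (i + 1) u) = ⊤ := by
      have h2 : (∫⁻ u in Ioo c x, pAuxE w I m (i + 1) u) = ⊤ := by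
        rw [setLIntegral_congr_fun measurableSet_Ioo
          (fun u hu => ih u (hsub hu).1), setLIntegral_const, Real.volume_Ioo]
        exact ENNReal.top_mul (ENNReal.ofReal_pos.2 (by linarith)).ne'
      exact top_le_iff.1 (h2 ▸ lintegral_mono_set hsub)
    show ENNReal.ofReal (w (m - (i + 1 + 1)) x) *
      (∫⁻ u in I ∩ Iio x, pAuxE w I m (i + 1) u) = ⊤
    rw [htop]
    exact ENNReal.mul_top (ENNReal.ofReal_pos.2 (hw _ x hx)).ne'

/-- Divergence of `∫ (u - a)⁻¹` near `a`. -/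
private lemma lint_inv_top {a x : ℝ} (hax : a < x) :
    (∫⁻ u in Ioo a x, ENNReal.ofReal ((u - a)⁻¹)) = ⊤ := by
  by_contra h
  obtain ⟨n, hn⟩ := ENNReal.exists_nat_gt h
  have h0 : (0 : ℝ) < x - a := by linarith
  set c := a + (x - a) * Real.exp (-(n : ℝ) - 1) with hcdef
  have hexp1 : Real.exp (-(n : ℝ) - 1) < 1 := by
    rw [Real.exp_lt_one_iff]
    have : (0:ℝ) ≤ (n : ℝ) := Nat.cast_nonneg n
    linarith
  have hac : a < c := by
    have := Real.exp_pos (-(n : ℝ) - 1)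
    nlinarith
  have hcx : c < x := by nlinarith
  have hca : (0 : ℝ) < c - a := by linarith
  have hcont : ContinuousOn (fun u : ℝ => (u - a)⁻¹) (Icc c x) := by
    refine ContinuousOn.inv₀ (by fun_prop) fun u hu => ?_
    have : a < u := lt_of_lt_of_le hac hu.1
    exact ne_of_gt (by linarith)
  have hInt : IntegrableOn (fun u : ℝ => (u - a)⁻¹) (Ioc c x) :=
    (hcont.integrableOn_Icc).mono_set Ioc_subset_Icc_self
  have hval : ∫ u in Ioc c x, (u - a)⁻¹ = Real.log (x - a) - Real.log (c - a) := by
    rw [← intervalIntegral.integral_of_le hcx.le]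
    rw [intervalIntegral.integral_comp_sub_right (fun u : ℝ => u⁻¹) a]
    rw [integral_inv (notMem_uIcc_of_lt hca (by linarith))]
    rw [Real.log_div (by linarith) (by linarith)]
  have h2 : (∫⁻ u in Ioc c x, ENNReal.ofReal ((u - a)⁻¹))
      = ENNReal.ofReal (Real.log (x - a) - Real.log (c - a)) := by
    rw [← MeasureTheory.ofReal_integral_eq_lintegral_ofReal hInt, hval]
    exact (ae_restrict_iff' measurableSet_Ioc).2 (ae_of_all _ fun u hu => by
      have : a < u := lt_of_lt_of_le hac hu.1.le
      exact inv_nonneg.2 (by linarith))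
  have hlog : Real.log (c - a) = Real.log (x - a) + (-(n : ℝ) - 1) := by
    have : c - a = (x - a) * Real.exp (-(n : ℝ) - 1) := by rw [hcdef]; ring
    rw [this, Real.log_mul (by linarith) (Real.exp_ne_zero _), Real.log_exp]
  have hge : ((n : ℝ≥0∞)) ≤ ∫⁻ u in Ioo a x, ENNReal.ofReal ((u - a)⁻¹) := by
    have e1 : (∫⁻ u in Ioo c x, ENNReal.ofReal ((u - a)⁻¹))
        = ∫⁻ u in Ioc c x, ENNReal.ofReal ((u - a)⁻¹) := setLIntegral_congr Ioo_ae_eq_Ioc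
    have e2 : (∫⁻ u in Ioo c x, ENNReal.ofReal ((u - a)⁻¹))
        ≤ ∫⁻ u in Ioo a x, ENNReal.ofReal ((u - a)⁻¹) :=
      lintegral_mono_set (fun u hu => ⟨lt_trans hac hu.1, hu.2⟩)
    refine le_trans ?_ e2
    rw [e1, h2, hlog]
    calc (n : ℝ≥0∞) = ENNReal.ofReal (n : ℝ) := (ENNReal.ofReal_natCast n).symm
      _ ≤ ENNReal.ofReal (Real.log (x - a) - (Real.log (x - a) + (-(n : ℝ) - 1))) :=
          ENNReal.ofReal_le_ofReal (by linarith)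
  exact absurd hn (not_lt.2 hge)

/-- Finiteness induction, bounded-below case. -/
private lemma fin_bound {I : Set ℝ} {w : ℕ → ℝ → ℝ} {a : ℝ}
    (hIio : ∀ x ∈ I, I ∩ Iio x = Ioo a x)
    (hgt : ∀ x ∈ I, a < x)
    (hw : ∀ i, ∀ u ∈ I, 0 ≤ w i u ∧ w i u * (u - a) ≤ 1 + (u - a))
    (m : ℕ) (hm : ∀ u ∈ I, w m u ≤ 1) :
    ∀ i, ∃ C : ℝ, 0 ≤ C ∧ ∃ k : ℕ, ∀ x ∈ I,
      pAuxE w I m i x ≤ ENNReal.ofReal (C * (1 + (x - a)) ^ k) := by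
  intro i
  induction i with
  | zero =>
    refine ⟨1, zero_le_one, 0, fun x hx => ?_⟩
    show ENNReal.ofReal (w m x) ≤ _
    exact ENNReal.ofReal_le_ofReal (by simpa using hm x hx)
  | succ i ih =>
    obtain ⟨C, hC, k, hck⟩ := ih
    refine ⟨C, hC, k + 1, fun x hx => ?_⟩
    have hax := hgt x hx
    have hbd : (∫⁻ u in I ∩ Iio x, pAuxE w I m i u)
        ≤ ENNReal.ofReal (C * (1 + (x - a)) ^ k) * ENNReal.ofReal (x - a) := by
      rw [hIio x hx]
      calc ∫⁻ u in Ioo a x, pAuxE w I m i u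
          ≤ ∫⁻ _ in Ioo a x, ENNReal.ofReal (C * (1 + (x - a)) ^ k) := by
            refine setLIntegral_mono measurable_const fun u hu => ?_
            have huI : u ∈ I := by
              have : u ∈ I ∩ Iio x := by rw [hIio x hx]; exact hu
              exact this.1
            refine (hck u huI).trans (ENNReal.ofReal_le_ofReal ?_)
            have h1 : (0:ℝ) ≤ 1 + (u - a) := by have := hgt u huI; linarith
            have h2 : (1 + (u - a)) ^ k ≤ (1 + (x - a)) ^ k :=
              pow_le_pow_left₀ h1 (by linarith [hu.2]) k
            nlinarith
        _ = ENNReal.ofReal (C * (1 + (x - a)) ^ k) * ENNReal.ofReal (x - a) := by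
            rw [setLIntegral_const, Real.volume_Ioo]
    have hwpos := hw (m - (i + 1)) x hx
    have hpow : (0:ℝ) ≤ C * (1 + (x - a)) ^ k := by
      have : (0:ℝ) ≤ 1 + (x - a) := by linarith
      positivity
    calc pAuxE w I m (i + 1) x
        = ENNReal.ofReal (w (m - (i + 1)) x) * ∫⁻ u in I ∩ Iio x, pAuxE w I m i u := rfl
      _ ≤ ENNReal.ofReal (w (m - (i + 1)) x) *
            (ENNReal.ofReal (C * (1 + (x - a)) ^ k) * ENNReal.ofReal (x - a)) :=
          mul_le_mul_right hbd _
      _ = ENNReal.ofReal (w (m - (i + 1)) x * ((C * (1 + (x - a)) ^ k) * (x - a))) := by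
          rw [ENNReal.ofReal_mul hwpos.1, ENNReal.ofReal_mul hpow]
      _ ≤ ENNReal.ofReal (C * (1 + (x - a)) ^ (k + 1)) := by
          refine ENNReal.ofReal_le_ofReal ?_
          have h2 := hwpos.2
          calc w (m - (i + 1)) x * ((C * (1 + (x - a)) ^ k) * (x - a))
              = (w (m - (i + 1)) x * (x - a)) * (C * (1 + (x - a)) ^ k) := by ring
            _ ≤ (1 + (x - a)) * (C * (1 + (x - a)) ^ k) :=
                mul_le_mul_of_nonneg_right h2 hpow
            _ = C * (1 + (x - a)) ^ (k + 1) := by ring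

private lemma lint_exp_Iio (D x : ℝ) (hD : 0 ≤ D) :
    (∫⁻ u in Iio x, ENNReal.ofReal (D * Real.exp u)) = ENNReal.ofReal (D * Real.exp x) := by
  rw [setLIntegral_congr Iio_ae_eq_Iic]
  rw [← MeasureTheory.ofReal_integral_eq_lintegral_ofReal ((integrableOn_exp_Iic x).const_mul D)]
  · rw [integral_const_mul, integral_exp_Iic]
  · exact ae_of_all _ fun u => by positivity

/-- Finiteness induction, unbounded-below case. -/
private lemma exp_bound {I : Set ℝ} {w : ℕ → ℝ → ℝ}
    (hIio : ∀ x ∈ I, I ∩ Iio x = Iio x)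
    (hw : ∀ i, ∀ u ∈ I, 0 ≤ w i u ∧ w i u ≤ 1 + Real.exp u)
    (m : ℕ) (hm : ∀ u ∈ I, w m u ≤ Real.exp u) :
    ∀ i, ∃ C : ℝ, 0 ≤ C ∧ ∃ k : ℕ, ∀ x ∈ I,
      pAuxE w I m i x ≤ ENNReal.ofReal (C * (1 + Real.exp x) ^ k * Real.exp x) := by
  intro i
  induction i with
  | zero =>
    refine ⟨1, zero_le_one, 0, fun x hx => ?_⟩
    show ENNReal.ofReal (w m x) ≤ _
    exact ENNReal.ofReal_le_ofReal (by simpa using hm x hx)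
  | succ i ih =>
    obtain ⟨C, hC, k, hck⟩ := ih
    refine ⟨C, hC, k + 1, fun x hx => ?_⟩
    have hexp : (0:ℝ) < Real.exp x := Real.exp_pos x
    have hpow : (0:ℝ) ≤ C * (1 + Real.exp x) ^ k := by positivity
    have hbd : (∫⁻ u in I ∩ Iio x, pAuxE w I m i u)
        ≤ ENNReal.ofReal ((C * (1 + Real.exp x) ^ k) * Real.exp x) := by
      rw [hIio x hx]
      calc ∫⁻ u in Iio x, pAuxE w I m i u
          ≤ ∫⁻ u in Iio x, ENNReal.ofReal ((C * (1 + Real.exp x) ^ k) * Real.exp u) := by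
            refine setLIntegral_mono (by fun_prop) fun u hu => ?_
            have huI : u ∈ I := by
              have : u ∈ I ∩ Iio x := by rw [hIio x hx]; exact hu
              exact this.1
            refine (hck u huI).trans (ENNReal.ofReal_le_ofReal ?_)
            have he : Real.exp u ≤ Real.exp x := Real.exp_le_exp.2 (le_of_lt hu)
            have h1 : (0:ℝ) < Real.exp u := Real.exp_pos u
            have h2 : (1 + Real.exp u) ^ k ≤ (1 + Real.exp x) ^ k :=
              pow_le_pow_left₀ (by positivity) (by linarith) k
            exact mul_le_mul_of_nonneg_right (mul_le_mul_of_nonneg_left h2 hC) h1.le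
        _ = ENNReal.ofReal ((C * (1 + Real.exp x) ^ k) * Real.exp x) :=
            lint_exp_Iio _ x hpow
    have hwx := hw (m - (i + 1)) x hx
    calc pAuxE w I m (i + 1) x
        = ENNReal.ofReal (w (m - (i + 1)) x) * ∫⁻ u in I ∩ Iio x, pAuxE w I m i u := rfl
      _ ≤ ENNReal.ofReal (w (m - (i + 1)) x) *
            ENNReal.ofReal ((C * (1 + Real.exp x) ^ k) * Real.exp x) :=
          mul_le_mul_right hbd _
      _ = ENNReal.ofReal (w (m - (i + 1)) x * ((C * (1 + Real.exp x) ^ k) * Real.exp x)) :=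
          (ENNReal.ofReal_mul hwx.1).symm
      _ ≤ ENNReal.ofReal (C * (1 + Real.exp x) ^ (k + 1) * Real.exp x) := by
          refine ENNReal.ofReal_le_ofReal ?_
          have h2 := hwx.2
          calc w (m - (i + 1)) x * ((C * (1 + Real.exp x) ^ k) * Real.exp x)
              ≤ (1 + Real.exp x) * ((C * (1 + Real.exp x) ^ k) * Real.exp x) :=
                mul_le_mul_of_nonneg_right h2 (by positivity)
            _ = C * (1 + Real.exp x) ^ (k + 1) * Real.exp x := by ring

end AuxStmt3

/-- Proposition `M`: when the left endpoint `a` of `I` does not belong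
to `I`, any prescribed subset `M` of `{j+1, j+2, …}` can be realized as the finiteness set
`F_{w;j∙} ∖ {j}` of the generalized polynomials `p_{a;j,m}` for a suitable gauge sequence. -/
theorem stmt_3 (I : Set ℝ) (hI : I.OrdConnected) (hIne : ∃ p ∈ I, ∃ q ∈ I, p < q)
    (hnomin : ¬∃ x, IsLeast I x)
    (j : ℕ) (M : Set ℕ) (hM : ∀ m ∈ M, j + 1 ≤ m) :
    ∃ w : ℕ → ℝ → ℝ, IsGauge I w ∧
      {m : ℕ | j + 1 ≤ m ∧ ∀ x ∈ I, pE w I j m x ≠ ⊤} = M := by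
  classical
  obtain ⟨p, hp, q, hq, hpq⟩ := hIne
  by_cases hbdd : BddBelow I
  · -- bounded-below case: `a = sInf I` is finite
    set a := sInf I with ha
    set w : ℕ → ℝ → ℝ := fun i x => if i ∈ M then 1 else (x - a)⁻¹ with hwdef
    have hgt : ∀ x ∈ I, a < x := fun x hx => sInf_lt_of_mem hnomin hbdd hx
    have hIio : ∀ x ∈ I, I ∩ Iio x = Ioo a x := fun x hx =>
      inter_Iio_eq_Ioo hI hnomin hbdd hx
    have hwpos : ∀ i, ∀ x ∈ I, 0 < w i x := by
      intro i x hx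
      by_cases hiM : i ∈ M
      · simp only [hwdef, if_pos hiM]; exact one_pos
      · simp only [hwdef, if_neg hiM]
        exact inv_pos.2 (by linarith [hgt x hx])
    refine ⟨w, ?_, ?_⟩
    · intro i
      refine ⟨fun x hx => hwpos i x hx, ?_, ?_⟩
      · by_cases hiM : i ∈ M
        · simp only [hwdef, if_pos hiM]; exact measurable_const
        · simp only [hwdef, if_neg hiM]
          exact (measurable_subtype_coe.sub measurable_const).inv
      · intro K hKI hK
        by_cases hiM : i ∈ M
        · exact ⟨1, fun x hx => by simp [hwdef, if_pos hiM]⟩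
        · have hcont : ContinuousOn (fun x : ℝ => (x - a)⁻¹) K := by
            refine ContinuousOn.inv₀ (by fun_prop) fun x hx => ?_
            have := hgt x (hKI hx); exact ne_of_gt (by linarith)
          obtain ⟨C, hC⟩ := hK.exists_bound_of_continuousOn hcont
          refine ⟨C, fun x hx => ?_⟩
          have := hC x hx
          rw [Real.norm_eq_abs] at this
          simpa [hwdef, if_neg hiM] using this
    · ext m
      simp only [mem_setOf_eq]
      constructor
      · rintro ⟨hm1, hm2⟩
        by_contra hmM
        have hdiv : ∀ x ∈ I, (∫⁻ u in I ∩ Iio x, ENNReal.ofReal (w m u)) = ⊤ := by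
          intro x hx
          rw [hIio x hx]
          have hwm : ∀ u : ℝ, w m u = (u - a)⁻¹ := fun u => by
            simp only [hwdef, if_neg hmM]
          simp only [hwm]
          exact lint_inv_top (hgt x hx)
        have htop := top_prop hI hnomin hwpos m hdiv (m - j - 1) p hp
        refine hm2 p hp ?_
        rw [show pE w I j m = pAuxE w I m (m - j) from rfl,
          show m - j = (m - j - 1) + 1 from by omega]
        exact htop
      · intro hmM
        have hwle : ∀ i, ∀ u ∈ I, 0 ≤ w i u ∧ w i u * (u - a) ≤ 1 + (u - a) := by
          intro i u hu
          have hau := hgt u hu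
          by_cases hiM : i ∈ M
          · simp only [hwdef, if_pos hiM]
            exact ⟨zero_le_one, by linarith⟩
          · simp only [hwdef, if_neg hiM]
            refine ⟨inv_nonneg.2 (by linarith), ?_⟩
            rw [inv_mul_cancel₀ (by linarith : u - a ≠ 0)]
            linarith
        have hmle : ∀ u ∈ I, w m u ≤ 1 := fun u hu => by
          simp only [hwdef, if_pos hmM]; exact le_refl _
        obtain ⟨C, hC, k, hck⟩ := fin_bound hIio hgt hwle m hmle (m - j)
        exact ⟨hM m hmM, fun x hx =>
          ne_top_of_le_ne_top ENNReal.ofReal_ne_top (hck x hx)⟩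
  · -- unbounded-below case
    set w : ℕ → ℝ → ℝ := fun i x => if i ∈ M then Real.exp x else 1 with hwdef
    have hIio : ∀ x ∈ I, I ∩ Iio x = Iio x := fun x hx => inter_Iio_eq_Iio hI hbdd hx
    have hwpos : ∀ i, ∀ x ∈ I, 0 < w i x := by
      intro i x hx
      by_cases hiM : i ∈ M
      · simp only [hwdef, if_pos hiM]; exact Real.exp_pos x
      · simp only [hwdef, if_neg hiM]; exact one_pos
    refine ⟨w, ?_, ?_⟩
    · intro i
      refine ⟨fun x hx => hwpos i x hx, ?_, ?_⟩
      · by_cases hiM : i ∈ M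
        · simp only [hwdef, if_pos hiM]
          exact Real.measurable_exp.comp measurable_subtype_coe
        · simp only [hwdef, if_neg hiM]; exact measurable_const
      · intro K hKI hK
        by_cases hiM : i ∈ M
        · obtain ⟨C, hC⟩ := hK.exists_bound_of_continuousOn Real.continuous_exp.continuousOn
          refine ⟨C, fun x hx => ?_⟩
          have := hC x hx
          rw [Real.norm_eq_abs] at this
          simpa [hwdef, if_pos hiM] using this
        · exact ⟨1, fun x hx => by simp [hwdef, if_neg hiM]⟩
    · ext m
      simp only [mem_setOf_eq]
      constructor
      · rintro ⟨hm1, hm2⟩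
        by_contra hmM
        have hdiv : ∀ x ∈ I, (∫⁻ u in I ∩ Iio x, ENNReal.ofReal (w m u)) = ⊤ := by
          intro x hx
          rw [hIio x hx]
          have hwm : ∀ u : ℝ, w m u = 1 := fun u => by simp only [hwdef, if_neg hmM]
          simp only [hwm, ENNReal.ofReal_one, setLIntegral_one, Real.volume_Iio]
        have htop := top_prop hI hnomin hwpos m hdiv (m - j - 1) p hp
        refine hm2 p hp ?_
        rw [show pE w I j m = pAuxE w I m (m - j) from rfl,
          show m - j = (m - j - 1) + 1 from by omega]
        exact htop
      · intro hmM
        have hwle : ∀ i, ∀ u ∈ I, 0 ≤ w i u ∧ w i u ≤ 1 + Real.exp u := by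
          intro i u hu
          have := Real.exp_pos u
          by_cases hiM : i ∈ M
          · simp only [hwdef, if_pos hiM]
            exact ⟨this.le, by linarith⟩
          · simp only [hwdef, if_neg hiM]
            exact ⟨zero_le_one, by linarith⟩
        have hmle : ∀ u ∈ I, w m u ≤ Real.exp u := fun u hu => by
          simp only [hwdef, if_pos hmM]; exact le_refl _
        obtain ⟨C, hC, k, hck⟩ := exp_bound hIio hwle m hmle (m - j)
        exact ⟨hM m hmM, fun x hx =>
          ne_top_of_le_ne_top ENNReal.ofReal_ne_top (hck x hx)⟩

end
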